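/- arXiv:2512.24904 — 3 statements merged into one kernel-verified Lean document; each statement's English description precedes it below -/
import Mathlib

section
/- Let X be a compact metric space and f : X → X a homeomorphism. Then f is cw-expansive if and only if f^k is cw-expansive for all nonzero integers k, and this is also equivalent to f^{i₀} being cw-expansive for a single nonzero integer i₀. -/
/-- Continuum-wise expansiveness of a self-homeomorphism, via its underlying bijection. -/
def CWExpansive {X : Type*} [MetricSpace X] (g : Equiv.Perm X) : Prop :=
  ∃ c > (0 : ℝ), ∀ A : Set X, IsCompact A → IsConnected A →
    (∀ n : ℤ, Metric.diam (⇑(g ^ n) '' A) ≤ c) → A.Subsingleton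

lemma cont_zpow {X : Type*} [TopologicalSpace X] (f : X ≃ₜ X) (n : ℤ) :
    Continuous ⇑((f.toEquiv : Equiv.Perm X) ^ n) := by
  cases n with
  | ofNat m =>
      rw [Int.ofNat_eq_coe, zpow_natCast, Equiv.Perm.coe_pow]
      exact f.continuous.iterate m
  | negSucc m =>
      rw [zpow_negSucc, ← inv_pow, Equiv.Perm.coe_pow]
      have : (f.toEquiv : Equiv.Perm X)⁻¹ = f.symm.toEquiv := rfl
      rw [this]
      exact f.symm.continuous.iterate (m + 1)

lemma cw_back {X : Type*} [MetricSpace X] (g : Equiv.Perm X) (k : ℤ) :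
    CWExpansive (g ^ k) → CWExpansive g := by
  rintro ⟨c, hc, h⟩
  refine ⟨c, hc, fun A hA hA' hd => h A hA hA' fun n => ?_⟩
  rw [← zpow_mul]
  exact hd (k * n)

lemma cw_fwd {X : Type*} [MetricSpace X] [CompactSpace X] (f : X ≃ₜ X) (k : ℤ) (hk : k ≠ 0) :
    CWExpansive (f.toEquiv : Equiv.Perm X) →
      CWExpansive ((f.toEquiv : Equiv.Perm X) ^ k) := by
  rintro ⟨c, hc, h⟩
  set g := (f.toEquiv : Equiv.Perm X) with hg
  have huc : ∀ r : ℤ, ∃ δ > 0, ∀ x y : X, dist x y < δ → dist ((g ^ r) x) ((g ^ r) y) < c := by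
    intro r
    exact Metric.uniformContinuous_iff.mp
      (CompactSpace.uniformContinuous_of_continuous (cont_zpow f r)) c hc
  choose δ hδpos hδ using huc
  set N := k.natAbs with hNdef
  have hN : 0 < N := Int.natAbs_pos.mpr hk
  have hne : (Finset.range N).Nonempty := ⟨0, Finset.mem_range.mpr hN⟩
  set d := (Finset.range N).inf' hne (fun r => δ (r : ℤ)) with hd
  have hdpos : 0 < d := by
    rw [hd, Finset.lt_inf'_iff]
    exact fun r _ => hδpos _
  have hdle : ∀ r : ℤ, 0 ≤ r → r < (N : ℤ) → d ≤ δ r := by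
    intro r hr0 hrN
    have h1 : r.toNat < N := by omega
    have h2 : ((r.toNat : ℕ) : ℤ) = r := Int.toNat_of_nonneg hr0
    calc d ≤ δ ((r.toNat : ℕ) : ℤ) := Finset.inf'_le _ (Finset.mem_range.mpr h1)
    _ = δ r := by rw [h2]
  refine ⟨d / 2, by positivity, fun A hA hconn hdiam => h A hA hconn fun m => ?_⟩
  -- decompose m = m % k + k * (m / k)
  set r := m % k with hr
  set q := m / k with hq
  have hm : m = r + k * q := by
    rw [hr, hq, add_comm]
    exact (Int.mul_ediv_add_emod m k).symm
  have hr0 : 0 ≤ r := Int.emod_nonneg m hk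
  have hrN : r < (N : ℤ) := by
    have h1 := Int.emod_lt m hk
    have h2 : |k| = (N : ℤ) := Int.abs_eq_natAbs k
    rw [hr]
    omega
  -- the set B = g^(k*q) '' A has diameter ≤ d/2
  set B := ⇑(g ^ (k * q)) '' A with hB
  have hBdiam : Metric.diam B ≤ d / 2 := by
    rw [hB, zpow_mul]
    exact hdiam q
  have hBbdd : Bornology.IsBounded B := (hA.image (cont_zpow f (k * q))).isBounded
  have himg : ⇑(g ^ m) '' A = ⇑(g ^ r) '' B := by
    rw [hB, ← Set.image_comp, hm, zpow_add]
    rfl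
  rw [himg]
  apply Metric.diam_le_of_forall_dist_le hc.le
  rintro _ ⟨x, hx, rfl⟩ _ ⟨y, hy, rfl⟩
  apply le_of_lt
  apply hδ r x y
  calc dist x y ≤ Metric.diam B := Metric.dist_le_diam_of_mem hBbdd hx hy
  _ ≤ d / 2 := hBdiam
  _ < d := by linarith
  _ ≤ δ r := hdle r hr0 hrN

theorem stmt_2 {X : Type*} [MetricSpace X] [CompactSpace X] (f : X ≃ₜ X) :
    (CWExpansive (f.toEquiv : Equiv.Perm X) ↔
      ∀ k : ℤ, k ≠ 0 → CWExpansive ((f.toEquiv : Equiv.Perm X) ^ k)) ∧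
    (∀ i₀ : ℤ, i₀ ≠ 0 →
      (CWExpansive (f.toEquiv : Equiv.Perm X) ↔
        CWExpansive ((f.toEquiv : Equiv.Perm X) ^ i₀))) := by
  constructor
  · constructor
    · exact fun h k hk => cw_fwd f k hk h
    · intro h
      have h1 := h 1 one_ne_zero
      rwa [zpow_one] at h1
  · exact fun i₀ hi₀ => ⟨cw_fwd f i₀ hi₀, cw_back _ i₀⟩
end

section
/- Let X be a compact metric space, f : X → X a homeomorphism, and N ≥ 1 a natural number. Then f is cwN-expansive if and only if f^k is cwN-expansive for every nonzero integer k. -/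
open Metric Set

private lemma diam_image_le {X : Type*} [MetricSpace X] [CompactSpace X]
    {φ : X → X} (hφ : Continuous φ) {ε : ℝ} (hε : 0 < ε) :
    ∃ δ > (0:ℝ), ∀ S : Set X, diam S ≤ δ → diam (φ '' S) ≤ ε := by
  have uc := CompactSpace.uniformContinuous_of_continuous hφ
  rw [Metric.uniformContinuous_iff] at uc
  obtain ⟨δ, hδ, h⟩ := uc ε hε
  refine ⟨δ/2, by positivity, fun S hS => ?_⟩
  apply diam_le_of_forall_dist_le hε.le
  rintro _ ⟨x, hx, rfl⟩ _ ⟨y, hy, rfl⟩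
  have hb : Bornology.IsBounded S := Metric.isBounded_of_compactSpace
  have hd := dist_le_diam_of_mem hb hx hy
  exact (h (lt_of_le_of_lt (hd.trans hS) (by linarith))).le

private lemma small_powers {X : Type*} [MetricSpace X] [CompactSpace X]
    (g : Equiv.Perm X) (hg : Continuous g) (hg' : Continuous ⇑g⁻¹)
    {c : ℝ} (hc : 0 < c) (m : ℕ) :
    ∃ c' > (0:ℝ), ∀ j : ℤ, j.natAbs ≤ m → ∀ S : Set X,
      diam S ≤ c' → diam (⇑(g ^ j) '' S) ≤ c := by
  induction m with
  | zero =>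
    refine ⟨c, hc, fun j hj S hS => ?_⟩
    have hj0 : j = 0 := by omega
    simpa [hj0] using hS
  | succ m ih =>
    obtain ⟨c', hc', H⟩ := ih
    obtain ⟨δ₁, hδ₁, h₁⟩ := diam_image_le hg hc'
    obtain ⟨δ₂, hδ₂, h₂⟩ := diam_image_le hg' hc'
    refine ⟨min δ₁ (min δ₂ c'), by positivity, fun j hj S hS => ?_⟩
    rcases le_or_gt j.natAbs m with hle | hgt
    · exact H j hle S (hS.trans ((min_le_right _ _).trans (min_le_right _ _)))
    · rcases le_or_gt 0 j with hjpos | hjneg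
      · have hrw : g ^ j = g ^ (j - 1) * g := by
          rw [← zpow_add_one]; congr 1; ring
        rw [hrw, Equiv.Perm.coe_mul, image_comp]
        exact H (j-1) (by omega) _ (h₁ S (hS.trans (min_le_left _ _)))
      · have hrw : g ^ j = g ^ (j + 1) * g⁻¹ := by
          rw [← zpow_sub_one]; congr 1; ring
        rw [hrw, Equiv.Perm.coe_mul, image_comp]
        exact H (j+1) (by omega) _
          (h₂ S (hS.trans ((min_le_right _ _).trans (min_le_left _ _))))

private lemma key_pos {X : Type*} [MetricSpace X] (g : Equiv.Perm X) {k : ℤ} (hk : k ≠ 0)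
    {c c' : ℝ}
    (Hs : ∀ j : ℤ, j.natAbs ≤ k.natAbs - 1 → ∀ S : Set X, diam S ≤ c' → diam (⇑(g^j) '' S) ≤ c)
    (S : Set X) (hS : ∀ n : ℤ, 0 ≤ n → diam (⇑((g^k)^n) '' S) ≤ c') :
    ∀ m : ℤ, 0 ≤ m * k → diam (⇑(g^m) '' S) ≤ c := by
  intro m hm
  set n := m / k with hn_def
  set j := m % k with hj_def
  have hj0 : 0 ≤ j := Int.emod_nonneg m hk
  have hjk : j < |k| := by rw [Int.abs_eq_natAbs]; exact Int.emod_lt m hk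
  have heq : m = k * n + j := (Int.mul_ediv_add_emod m k).symm
  have hjn : j.natAbs ≤ k.natAbs - 1 := by
    have h1 : j < (k.natAbs : ℤ) := by rwa [Int.abs_eq_natAbs] at hjk
    omega
  have hn : 0 ≤ n := by
    by_contra hcon
    push_neg at hcon
    rcases hk.lt_or_gt with hkneg | hkpos
    · have hjk' : j < -k := by rwa [abs_of_neg hkneg] at hjk
      have h1 : 0 < k * n := mul_pos_of_neg_of_neg hkneg hcon
      have h2 : 0 < m := by linarith
      have h3 : m * k < 0 := mul_neg_of_pos_of_neg h2 hkneg
      linarith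
    · have hjk' : j < k := by rwa [abs_of_pos hkpos] at hjk
      have h1 : k * n ≤ k * (-1) := mul_le_mul_of_nonneg_left (by linarith) hkpos.le
      have h2 : m < 0 := by linarith
      have h3 : m * k < 0 := mul_neg_of_neg_of_pos h2 hkpos
      linarith
  have hrw : g ^ m = g ^ j * g ^ (k * n) := by
    rw [← zpow_add]; congr 1; omega
  rw [hrw, Equiv.Perm.coe_mul, image_comp]
  refine Hs j hjn _ ?_
  rw [zpow_mul]
  exact hS n hn

private lemma key_neg {X : Type*} [MetricSpace X] (g : Equiv.Perm X) {k : ℤ} (hk : k ≠ 0)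
    {c c' : ℝ}
    (Hs : ∀ j : ℤ, j.natAbs ≤ k.natAbs - 1 → ∀ S : Set X, diam S ≤ c' → diam (⇑(g^j) '' S) ≤ c)
    (S : Set X) (hS : ∀ n : ℤ, n ≤ 0 → diam (⇑((g^k)^n) '' S) ≤ c') :
    ∀ m : ℤ, m * k ≤ 0 → diam (⇑(g^m) '' S) ≤ c := by
  intro m hm
  set n := m / k with hn_def
  set j := m % k with hj_def
  have hj0 : 0 ≤ j := Int.emod_nonneg m hk
  have hjk : j < |k| := by rw [Int.abs_eq_natAbs]; exact Int.emod_lt m hk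
  have heq : m = k * n + j := (Int.mul_ediv_add_emod m k).symm
  have hjn : j.natAbs ≤ k.natAbs - 1 := by
    have h1 : j < (k.natAbs : ℤ) := by rwa [Int.abs_eq_natAbs] at hjk
    omega
  have hn : n ≤ 0 := by
    by_contra hcon
    push_neg at hcon
    rcases hk.lt_or_gt with hkneg | hkpos
    · have hjk' : j < -k := by rwa [abs_of_neg hkneg] at hjk
      have h1 : k * n ≤ k * 1 := mul_le_mul_of_nonpos_left (by linarith) hkneg.le
      have h2 : m < 0 := by linarith
      have h3 : 0 < m * k := mul_pos_of_neg_of_neg h2 hkneg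
      linarith
    · have hjk' : j < k := by rwa [abs_of_pos hkpos] at hjk
      have h1 : k * 1 ≤ k * n := mul_le_mul_of_nonneg_left (by linarith) hkpos.le
      have h2 : 0 < m := by linarith
      have h3 : 0 < m * k := mul_pos h2 hkpos
      linarith
  have hrw : g ^ m = g ^ j * g ^ (k * n) := by
    rw [← zpow_add]; congr 1; omega
  rw [hrw, Equiv.Perm.coe_mul, image_comp]
  refine Hs j hjn _ ?_
  rw [zpow_mul]
  exact hS n hn



/-- A self-homeomorphism (underlying bijection `g`) is cwN-expansive if there is `c > 0`
such that for all connected compacta `A`, `B` with `diam (gⁿ A) ≤ c` for all `n ≥ 0` and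
`diam (gⁿ B) ≤ c` for all `n ≤ 0`, the intersection `A ∩ B` has at most `N` points. -/
def CWNExpansive {X : Type*} [MetricSpace X] (g : Equiv.Perm X) (N : ℕ) : Prop :=
  ∃ c > (0 : ℝ), ∀ A B : Set X, IsCompact A → IsConnected A → IsCompact B → IsConnected B →
    (∀ n : ℤ, 0 ≤ n → Metric.diam (⇑(g ^ n) '' A) ≤ c) →
    (∀ n : ℤ, n ≤ 0 → Metric.diam (⇑(g ^ n) '' B) ≤ c) →
    (A ∩ B).encard ≤ (N : ℕ∞)

theorem stmt_3 {X : Type*} [MetricSpace X] [CompactSpace X] (f : X ≃ₜ X) (N : ℕ)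
    (hN : 1 ≤ N) :
    CWNExpansive (f.toEquiv : Equiv.Perm X) N ↔
      ∀ k : ℤ, k ≠ 0 → CWNExpansive ((f.toEquiv : Equiv.Perm X) ^ k) N := by
  constructor
  · rintro ⟨c, hc, H⟩ k hk
    set g : Equiv.Perm X := (f.toEquiv : Equiv.Perm X) with hg_def
    have hg : Continuous ⇑g := f.continuous
    have hg' : Continuous ⇑g⁻¹ := f.symm.continuous
    obtain ⟨c', hc', Hs⟩ := small_powers g hg hg' hc (k.natAbs - 1)
    refine ⟨c', hc', fun A B cA conA cB conB hA hB => ?_⟩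
    rcases hk.lt_or_gt with hkneg | hkpos
    · rw [Set.inter_comm]
      exact H B A cB conB cA conA
        (fun m hm => key_neg g hk Hs B hB m
          (mul_nonpos_iff.mpr (Or.inl ⟨hm, hkneg.le⟩)))
        (fun m hm => key_pos g hk Hs A hA m
          (mul_nonneg_iff.mpr (Or.inr ⟨hm, hkneg.le⟩)))
    · exact H A B cA conA cB conB
        (fun m hm => key_pos g hk Hs A hA m (mul_nonneg hm hkpos.le))
        (fun m hm => key_neg g hk Hs B hB m
          (mul_nonpos_iff.mpr (Or.inr ⟨hm, hkpos.le⟩)))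
  · intro h
    have h1 := h 1 one_ne_zero
    rwa [zpow_one] at h1
end

section
/- Let X be a compact metric space, f : X → X a homeomorphism, and N ≥ 1. Then f is N-expansive if and only if f^k is N-expansive for every nonzero integer k. -/
/-- The dynamical ball of radius `α` at `x` for the bijection `g` (iterated via `g ^ n`). -/
def dynBall {X : Type*} [MetricSpace X] (g : Equiv.Perm X) (α : ℝ) (x : X) : Set X :=
  {y | ∀ n : ℤ, dist ((g ^ n) x) ((g ^ n) y) ≤ α}

/-- `g` is N-expansive if some `α > 0` makes every dynamical ball have at most `N` points. -/
def NExpansive {X : Type*} [MetricSpace X] (g : Equiv.Perm X) (N : ℕ) : Prop :=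
  ∃ α > (0 : ℝ), ∀ x : X, (dynBall g α x).encard ≤ (N : ℕ∞)

private lemma contPowNat {X : Type*} [MetricSpace X] (h : X ≃ₜ X) :
    ∀ m : ℕ, Continuous fun x => ((h.toEquiv : Equiv.Perm X) ^ m) x
  | 0 => by simpa using continuous_id'
  | (m + 1) => by
      have ih := contPowNat h m
      simp only [pow_succ, Equiv.Perm.mul_apply]
      exact ih.comp h.continuous

private lemma contZpow {X : Type*} [MetricSpace X] (h : X ≃ₜ X) (n : ℤ) :
    Continuous fun x => ((h.toEquiv : Equiv.Perm X) ^ n) x := by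
  cases n with
  | ofNat m => simpa [zpow_natCast] using contPowNat h m
  | negSucc m =>
      have e : (h.toEquiv : Equiv.Perm X) ^ (Int.negSucc m)
          = (h.symm.toEquiv : Equiv.Perm X) ^ (m + 1) := by
        rw [zpow_negSucc, ← inv_pow]
        rfl
      rw [e]
      exact contPowNat h.symm (m + 1)

theorem stmt_4 {X : Type*} [MetricSpace X] [CompactSpace X] (f : X ≃ₜ X) (N : ℕ)
    (hN : 1 ≤ N) :
    NExpansive (f.toEquiv : Equiv.Perm X) N ↔
      ∀ k : ℤ, k ≠ 0 → NExpansive ((f.toEquiv : Equiv.Perm X) ^ k) N := by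
  set g : Equiv.Perm X := (f.toEquiv : Equiv.Perm X) with hg
  constructor
  · rintro ⟨α, hα, hball⟩ k hk
    -- uniform continuity of each g^j
    have hUC : ∀ j : ℕ, ∃ δ > (0 : ℝ), ∀ a b : X, dist a b < δ →
        dist ((g ^ (j : ℤ)) a) ((g ^ (j : ℤ)) b) < α := by
      intro j
      have hc : Continuous fun x => (g ^ (j : ℤ)) x := contZpow f (j : ℤ)
      have huc : UniformContinuous fun x => (g ^ (j : ℤ)) x :=
        CompactSpace.uniformContinuous_of_continuous hc
      exact Metric.uniformContinuous_iff.mp huc α hα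
    choose δ hδpos hδ using hUC
    set K : ℕ := k.natAbs with hK
    have hKpos : 0 < K := Int.natAbs_pos.mpr hk
    have hne : (Finset.range K).Nonempty := Finset.nonempty_range_iff.mpr hKpos.ne'
    set β : ℝ := (Finset.range K).inf' hne δ with hβ
    have hβpos : 0 < β := by
      rw [hβ, Finset.lt_inf'_iff]
      intro j _; exact hδpos j
    refine ⟨β / 2, by positivity, fun x => ?_⟩
    have hsub : dynBall (g ^ k) (β / 2) x ⊆ dynBall g α x := by
      intro y hy n
      set q : ℤ := n / (K : ℤ) with hq
      set r : ℤ := n % (K : ℤ) with hr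
      have hr0 : 0 ≤ r := Int.emod_nonneg n (by exact_mod_cast hKpos.ne')
      have hrK : r < (K : ℤ) := Int.emod_lt_of_pos n (by exact_mod_cast hKpos)
      have hn : n = r + (K : ℤ) * q := by
        rw [hq, hr]; exact (Int.emod_add_mul_ediv n (K : ℤ)).symm
      obtain ⟨m, hm⟩ : ∃ m : ℤ, k * m = (K : ℤ) * q := by
        rcases Int.natAbs_eq k with h | h
        · exact ⟨q, by rw [hK, ← h]⟩
        · have h' : -k = (k.natAbs : ℤ) := by omega
          exact ⟨-q, by rw [hK, ← h']; ring⟩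
      have hglue : (g ^ n) = (g ^ r) * ((g ^ k) ^ m) := by
        rw [← zpow_mul, hm, ← zpow_add, ← hn]
      have key : dist (((g ^ k) ^ m) x) (((g ^ k) ^ m) y) < δ r.toNat := by
        have h1 : dist (((g ^ k) ^ m) x) (((g ^ k) ^ m) y) ≤ β / 2 := hy m
        have h2 : β ≤ δ r.toNat := by
          rw [hβ]
          exact Finset.inf'_le δ (Finset.mem_range.mpr (by omega))
        linarith
      have := hδ r.toNat _ _ key
      have hrt : ((r.toNat : ℕ) : ℤ) = r := Int.toNat_of_nonneg hr0
      rw [hrt] at this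
      calc dist ((g ^ n) x) ((g ^ n) y)
          = dist ((g ^ r) (((g ^ k) ^ m) x)) ((g ^ r) (((g ^ k) ^ m) y)) := by
            rw [hglue]; rfl
        _ ≤ α := le_of_lt this
    exact le_trans (Set.encard_mono hsub) (hball x)
  · intro h
    have := h 1 one_ne_zero
    rwa [zpow_one] at this
end
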